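/- arXiv:2203.11481 — 2 statements merged into one kernel-verified Lean document; each statement's English description precedes it below -/
import Mathlib

section
/- Let W ⊆ ℝ^d be a nonempty closed convex set with metric projection Π_W, and let F : ℝ^d → ℝ be differentiable and λ-strongly convex (λ > 0), with w* = argmin_{w∈W} F(w). On a probability space with filtration (𝓕_t), let w_1 ∈ W be fixed and define w_{t+1} = Π_W(w_t − η_t g_t) with step sizes η_t = 2/(λ(t+1)), where each g_t is an 𝓕_{t+1}-measurable random vector satisfying E[g_t | 𝓕_t] = ∇F(w_t) and E[‖g_t‖² | 𝓕_t] ≤ G² almost surely (and w_t is 𝓕_t-measurable). Then for every T ≥ 1 the weighted average w̄_T := (2/(T(T+1))) Σ_{t=1}^T t·w_t satisfies E[F(w̄_T)] − F(w*) ≤ 2G²/(λ(T+1)). -/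
open MeasureTheory ProbabilityTheory RealInnerProductSpace
open scoped BigOperators

theorem condexp_clm_comp' {α : Type*} {m m0 : MeasurableSpace α} {μ : Measure α}
    {E F : Type*} [NormedAddCommGroup E] [NormedSpace ℝ E] [CompleteSpace E]
    [NormedAddCommGroup F] [NormedSpace ℝ F] [CompleteSpace F]
    (hm : m ≤ m0) [SigmaFinite (μ.trim hm)] (L : E →L[ℝ] F) {f : α → E}
    (hf : Integrable f μ) :
    (μ[fun ω => L (f ω)|m]) =ᵐ[μ] fun ω => L ((μ[f|m]) ω) := by
  refine (ae_eq_condExp_of_forall_setIntegral_eq hm (L.integrable_comp hf)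
    (fun s _ _ => (L.integrable_comp integrable_condExp).integrableOn)
    (fun s hs hμs => ?_) ?_).symm
  · rw [L.integral_comp_comm integrable_condExp.integrableOn,
      L.integral_comp_comm hf.integrableOn, setIntegral_condExp hm hf hs]
  · exact StronglyMeasurable.aestronglyMeasurable
      (L.continuous.comp_stronglyMeasurable stronglyMeasurable_condExp)

theorem proj_nonexpansive' {d : ℕ} {W : Set (EuclideanSpace ℝ (Fin d))}
    (hW_convex : Convex ℝ W)
    {proj : EuclideanSpace ℝ (Fin d) → EuclideanSpace ℝ (Fin d)}
    (hproj_mem : ∀ x, proj x ∈ W)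
    (hproj_dist : ∀ x, ∀ y ∈ W, ‖x - proj x‖ ≤ ‖x - y‖)
    (x : EuclideanSpace ℝ (Fin d)) {y : EuclideanSpace ℝ (Fin d)} (hy : y ∈ W) :
    ‖proj x - y‖ ≤ ‖x - y‖ := by
  set p := proj x with hp
  have hobtuse : ⟪x - p, y - p⟫ ≤ 0 := by
    by_contra hpos
    push_neg at hpos
    set c := ⟪x - p, y - p⟫ with hc
    set r := ‖y - p‖ ^ 2 with hr
    have key : ∀ θ : ℝ, 0 < θ → θ ≤ 1 → 2 * θ * c ≤ θ ^ 2 * r := by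
      intro θ hθ0 hθ1
      have hmem : p + θ • (y - p) ∈ W := by
        have := hW_convex (hproj_mem x) hy (by linarith : (0:ℝ) ≤ 1 - θ) hθ0.le (by ring)
        convert this using 1
        rw [hp]
        module
      have hdist := hproj_dist x _ hmem
      have hsq : ‖x - p‖ ^ 2 ≤ ‖x - (p + θ • (y - p))‖ ^ 2 := by
        have h1 := norm_nonneg (x - p)
        nlinarith [hdist]
      have hexp : ‖x - (p + θ • (y - p))‖ ^ 2
          = ‖x - p‖ ^ 2 - 2 * θ * c + θ ^ 2 * r := by
        have : x - (p + θ • (y - p)) = (x - p) - θ • (y - p) := by abel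
        rw [this, norm_sub_sq_real, real_inner_smul_right, norm_smul, Real.norm_eq_abs,
          abs_of_pos hθ0, mul_pow, ← hc, ← hr]
        ring
      rw [hexp] at hsq
      linarith
    have hr0 : 0 < r := by
      by_contra hr0
      push_neg at hr0
      have := key 1 one_pos le_rfl
      nlinarith
    have hθ := key (min 1 (c / r)) (lt_min one_pos (div_pos hpos hr0)) (min_le_left _ _)
    have h1 : min 1 (c / r) ≤ c / r := min_le_right _ _
    have h2 : 0 < min 1 (c / r) := lt_min one_pos (div_pos hpos hr0)
    nlinarith [mul_le_mul_of_nonneg_left h1 (le_of_lt h2), div_mul_cancel₀ c (ne_of_gt hr0)]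
  have hid : ‖x - y‖ ^ 2 = ‖x - p‖ ^ 2 - 2 * ⟪x - p, y - p⟫ + ‖y - p‖ ^ 2 := by
    have : x - y = (x - p) - (y - p) := by abel
    rw [this, norm_sub_sq_real]
  have : ‖p - y‖ ^ 2 ≤ ‖x - y‖ ^ 2 := by
    rw [show p - y = -(y - p) by abel, norm_neg]
    nlinarith [sq_nonneg ‖x - p‖]
  nlinarith [norm_nonneg (p - y), norm_nonneg (x - y)]

set_option maxHeartbeats 1000000 in
/-- **Convergence of projected SGD with non-uniform averaging for strongly convex objectives.**
Let `W` be a nonempty closed convex subset of `ℝ^d` with metric projection `proj`, and let `F`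
be differentiable and `λ`-strongly convex with minimizer `w*` over `W`.  Run projected
stochastic gradient descent `w_{t+1} = proj (w_t − η_t g_t)` with `η_t = 2/(λ(t+1))`, where
`g_t` is `𝓕_{t+1}`-measurable, `E[g_t | 𝓕_t] = ∇F(w_t)` and `E[‖g_t‖² | 𝓕_t] ≤ G²` a.s.
Then the weighted average `w̄_T = (2/(T(T+1))) Σ_{t=1}^T t·w_t` satisfies
`E[F(w̄_T)] − F(w*) ≤ 2G²/(λ(T+1))`. -/
theorem sgd_strongly_convex_convergence
    {Ω : Type*} {m0 : MeasurableSpace Ω} (μ : Measure Ω) [IsProbabilityMeasure μ]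
    (ℱ : MeasureTheory.Filtration ℕ m0)
    (d : ℕ)
    (W : Set (EuclideanSpace ℝ (Fin d))) (hW_ne : W.Nonempty) (hW_closed : IsClosed W)
    (hW_convex : Convex ℝ W)
    -- the metric projection onto `W`:
    (proj : EuclideanSpace ℝ (Fin d) → EuclideanSpace ℝ (Fin d))
    (hproj_mem : ∀ x, proj x ∈ W)
    (hproj_dist : ∀ x, ∀ y ∈ W, ‖x - proj x‖ ≤ ‖x - y‖)
    (F : EuclideanSpace ℝ (Fin d) → ℝ) (hF_diff : Differentiable ℝ F)
    (lam : ℝ) (hlam : 0 < lam)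
    -- `λ`-strong convexity of `F`:
    (hF_sc : ∀ v w : EuclideanSpace ℝ (Fin d),
      F w + ⟪gradient F w, v - w⟫ + lam / 2 * ‖v - w‖ ^ 2 ≤ F v)
    (wstar : EuclideanSpace ℝ (Fin d)) (hwstar_mem : wstar ∈ W)
    (hwstar_min : ∀ w ∈ W, F wstar ≤ F w)
    (G : ℝ)
    (w g : ℕ → Ω → EuclideanSpace ℝ (Fin d))
    (w1 : EuclideanSpace ℝ (Fin d)) (hw1_mem : w1 ∈ W)
    (hw_adapted : ∀ t, StronglyMeasurable[ℱ t] (w t))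
    (hg_meas : ∀ t, StronglyMeasurable[ℱ (t + 1)] (g t))
    (hg_int : ∀ t, Integrable (g t) μ)
    (hg_sq_int : ∀ t, Integrable (fun ω => ‖g t ω‖ ^ 2) μ)
    -- `E[g_t | 𝓕_t] = ∇F(w_t)`:
    (hg_unbiased : ∀ t, μ[g t|ℱ t] =ᵐ[μ] fun ω => gradient F (w t ω))
    -- `E[‖g_t‖² | 𝓕_t] ≤ G²` almost surely:
    (hg_bdd : ∀ t, μ[fun ω => ‖g t ω‖ ^ 2|ℱ t] ≤ᵐ[μ] fun _ => G ^ 2)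
    (hw_init : ∀ ω, w 1 ω = w1)
    (hw_rec : ∀ t, 1 ≤ t → ∀ ω,
      w (t + 1) ω = proj (w t ω - (2 / (lam * (t + 1))) • g t ω))
    (T : ℕ) (hT : 1 ≤ T) :
    (∫ ω, F ((2 / (T * (T + 1) : ℝ)) • ∑ t ∈ Finset.Icc 1 T, (t : ℝ) • w t ω) ∂μ) - F wstar ≤
      2 * G ^ 2 / (lam * (T + 1)) := by
  classical
  have hm : ∀ t : ℕ, ℱ t ≤ m0 := fun t => ℱ.le t
  have hFcont : Continuous F := hF_diff.continuous
  have h_nonexp : ∀ x : EuclideanSpace ℝ (Fin d), ∀ y ∈ W, ‖proj x - y‖ ≤ ‖x - y‖ :=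
    fun x y hy => proj_nonexpansive' hW_convex hproj_mem hproj_dist x hy
  have hw_mem : ∀ t : ℕ, 1 ≤ t → ∀ ω, w t ω ∈ W := by
    intro t
    induction t with
    | zero => omega
    | succ n ih =>
      intro _ ω
      rcases Nat.lt_or_ge n 1 with h | h
      · have : n = 0 := by omega
        subst this
        rw [hw_init ω]; exact hw1_mem
      · rw [hw_rec n h ω]; exact hproj_mem _
  have hw_meas : ∀ t, AEStronglyMeasurable (w t) μ :=
    fun t => ((hw_adapted t).mono (hm t)).aestronglyMeasurable
  have hg_meas' : ∀ t, AEStronglyMeasurable (g t) μ :=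
    fun t => ((hg_meas t).mono (hm (t + 1))).aestronglyMeasurable
  have hXmeas : ∀ t, AEStronglyMeasurable (fun ω => w t ω - wstar) μ :=
    fun t => (hw_meas t).sub aestronglyMeasurable_const
  have hX2meas : ∀ t, AEStronglyMeasurable (fun ω => ‖w t ω - wstar‖ ^ 2) μ :=
    fun t => (continuous_pow 2).comp_aestronglyMeasurable (hXmeas t).norm
  have hcoord : ∀ (x : EuclideanSpace ℝ (Fin d)) (i : Fin d), |x i| ≤ ‖x‖ := by
    intro x i
    rw [EuclideanSpace.norm_eq, ← Real.sqrt_sq_eq_abs]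
    apply Real.sqrt_le_sqrt
    have := Finset.single_le_sum (f := fun j => ‖x j‖ ^ 2) (fun j _ => sq_nonneg _)
      (Finset.mem_univ i)
    simpa [Real.norm_eq_abs, sq_abs] using this
  -- integrability of ‖w t - wstar‖²
  have hX2int : ∀ t : ℕ, 1 ≤ t → Integrable (fun ω => ‖w t ω - wstar‖ ^ 2) μ := by
    intro t
    induction t with
    | zero => omega
    | succ n ih =>
      intro _
      rcases Nat.lt_or_ge n 1 with h | h
      · have : n = 0 := by omega
        subst this
        have he : (fun ω => ‖w 1 ω - wstar‖ ^ 2) = fun _ => ‖w1 - wstar‖ ^ 2 := by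
          funext ω; rw [hw_init ω]
        rw [he]; exact integrable_const _
      · have hbd : ∀ ω, ‖w (n + 1) ω - wstar‖ ^ 2 ≤
            2 * ‖w n ω - wstar‖ ^ 2 + (2 * (2 / (lam * (n + 1))) ^ 2) * ‖g n ω‖ ^ 2 := by
          intro ω
          have h1 : ‖w (n + 1) ω - wstar‖
              ≤ ‖(w n ω - (2 / (lam * (n + 1))) • g n ω) - wstar‖ := by
            rw [hw_rec n h ω]; exact h_nonexp _ _ hwstar_mem
          have h2 : ‖(w n ω - (2 / (lam * (n + 1))) • g n ω) - wstar‖ ≤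
              ‖w n ω - wstar‖ + |2 / (lam * ((n : ℝ) + 1))| * ‖g n ω‖ := by
            have he : (w n ω - (2 / (lam * ((n : ℝ) + 1))) • g n ω) - wstar
                = (w n ω - wstar) - (2 / (lam * ((n : ℝ) + 1))) • g n ω := by abel
            rw [he]
            refine (norm_sub_le _ _).trans ?_
            rw [norm_smul, Real.norm_eq_abs]
          have h3 : (|2 / (lam * ((n : ℝ) + 1))|) ^ 2 = (2 / (lam * ((n : ℝ) + 1))) ^ 2 :=
            sq_abs _
          nlinarith [norm_nonneg (w (n + 1) ω - wstar), norm_nonneg (w n ω - wstar),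
            norm_nonneg (g n ω), abs_nonneg (2 / (lam * ((n : ℝ) + 1))),
            sq_nonneg (‖w n ω - wstar‖ - |2 / (lam * ((n : ℝ) + 1))| * ‖g n ω‖)]
        refine Integrable.mono' (((ih h).const_mul 2).add
          ((hg_sq_int n).const_mul (2 * (2 / (lam * (n + 1))) ^ 2))) (hX2meas (n + 1)) ?_
        filter_upwards with ω
        rw [Real.norm_eq_abs, abs_of_nonneg (sq_nonneg _)]
        exact hbd ω
  have ha_nonneg : ∀ t : ℕ, 0 ≤ ∫ ω, ‖w t ω - wstar‖ ^ 2 ∂μ :=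
    fun t => integral_nonneg fun ω => sq_nonneg _
  -- integrability of the inner product term
  have hInnerInt : ∀ t : ℕ, 1 ≤ t → Integrable (fun ω => ⟪g t ω, w t ω - wstar⟫) μ := by
    intro t ht
    refine Integrable.mono' (((hg_sq_int t).add (hX2int t ht)).const_mul (1 / 2))
      ((hg_meas' t).inner (hXmeas t)) ?_
    filter_upwards with ω
    have h1 := abs_real_inner_le_norm (g t ω) (w t ω - wstar)
    simp only [Pi.add_apply]
    rw [Real.norm_eq_abs]
    nlinarith [norm_nonneg (g t ω), norm_nonneg (w t ω - wstar),
      sq_nonneg (‖g t ω‖ - ‖w t ω - wstar‖)]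
  -- coordinate conditional expectations
  have hcond_coord : ∀ (t : ℕ) (i : Fin d),
      (μ[fun ω => g t ω i|ℱ t]) =ᵐ[μ] fun ω => gradient F (w t ω) i := by
    intro t i
    have h1 := condexp_clm_comp' (hm t) (EuclideanSpace.proj i) (hg_int t)
    have h1' : (μ[fun ω => g t ω i|ℱ t]) =ᵐ[μ] fun ω => (μ[g t|ℱ t]) ω i := h1
    refine h1'.trans ?_
    filter_upwards [hg_unbiased t] with ω hω
    rw [hω]
  have hprodInt : ∀ t : ℕ, 1 ≤ t → ∀ i : Fin d,
      Integrable (fun ω => (w t ω - wstar) i * g t ω i) μ := by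
    intro t ht i
    refine Integrable.mono' (((hg_sq_int t).add (hX2int t ht)).const_mul (1 / 2))
      (((EuclideanSpace.proj i).continuous.comp_aestronglyMeasurable (hXmeas t)).mul
        ((EuclideanSpace.proj i).continuous.comp_aestronglyMeasurable (hg_meas' t))) ?_
    filter_upwards with ω
    simp only [Pi.add_apply]
    rw [Real.norm_eq_abs, abs_mul]
    have h1 := hcoord (w t ω - wstar) i
    have h2 := hcoord (g t ω) i
    nlinarith [abs_nonneg ((w t ω - wstar) i), abs_nonneg (g t ω i),
      norm_nonneg (w t ω - wstar), norm_nonneg (g t ω),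
      sq_nonneg (‖g t ω‖ - ‖w t ω - wstar‖)]
  -- pull-out for the inner product
  have hcond_inner : ∀ t : ℕ, 1 ≤ t →
      (μ[fun ω => ⟪g t ω, w t ω - wstar⟫|ℱ t]) =ᵐ[μ]
        fun ω => ⟪gradient F (w t ω), w t ω - wstar⟫ := by
    intro t ht
    have hinner_exp : ∀ (u : EuclideanSpace ℝ (Fin d)) (ω : Ω),
        ⟪u, w t ω - wstar⟫ = ∑ i : Fin d, (w t ω - wstar) i * u i := by
      intro u ω
      rw [real_inner_comm]
      simp [PiLp.inner_apply, RCLike.inner_apply, conj_trivial]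
      exact Finset.sum_congr rfl fun i _ => mul_comm _ _
    have hrw : (fun ω => ⟪g t ω, w t ω - wstar⟫)
        = ∑ i : Fin d, (fun ω => (w t ω - wstar) i * g t ω i) := by
      funext ω
      rw [hinner_exp (g t ω) ω]
      simp
    have hterm : ∀ i : Fin d, (μ[fun ω => (w t ω - wstar) i * g t ω i|ℱ t]) =ᵐ[μ]
        fun ω => (w t ω - wstar) i * gradient F (w t ω) i := by
      intro i
      have hXi : StronglyMeasurable[ℱ t] (fun ω => (w t ω - wstar) i) :=
        (EuclideanSpace.proj i).continuous.comp_stronglyMeasurable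
          ((hw_adapted t).sub stronglyMeasurable_const)
      have hgi : Integrable (fun ω => g t ω i) μ := by
        have := (EuclideanSpace.proj (𝕜 := ℝ) i).integrable_comp (hg_int t)
        exact this
      have hmul := condExp_mul_of_stronglyMeasurable_left (m := ℱ t) (μ := μ) hXi
        (show Integrable ((fun ω => (w t ω - wstar) i) * fun ω => g t ω i) μ from
          hprodInt t ht i) hgi
      refine hmul.trans ?_
      filter_upwards [hcond_coord t i] with ω hω
      simp only [Pi.mul_apply]
      rw [hω]
    have hsum := condExp_finset_sum (μ := μ) (m := ℱ t)
      (f := fun i => fun ω => (w t ω - wstar) i * g t ω i)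
      (fun i (_ : i ∈ Finset.univ) => hprodInt t ht i)
    rw [hrw]
    refine hsum.trans ?_
    have hall : ∀ᵐ ω ∂μ, ∀ i : Fin d,
        (μ[fun ω => (w t ω - wstar) i * g t ω i|ℱ t]) ω
          = (w t ω - wstar) i * gradient F (w t ω) i := ae_all_iff.mpr hterm
    filter_upwards [hall] with ω hω
    rw [Finset.sum_apply]
    rw [Finset.sum_congr rfl (fun i _ => hω i)]
    rw [hinner_exp (gradient F (w t ω)) ω]
  have hgradInnerInt : ∀ t : ℕ, 1 ≤ t →
      Integrable (fun ω => ⟪gradient F (w t ω), w t ω - wstar⟫) μ :=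
    fun t ht => integrable_condExp.congr (hcond_inner t ht)
  have hEinner : ∀ t : ℕ, 1 ≤ t → (∫ ω, ⟪g t ω, w t ω - wstar⟫ ∂μ)
      = ∫ ω, ⟪gradient F (w t ω), w t ω - wstar⟫ ∂μ := by
    intro t ht
    rw [← integral_condExp (hm t) (f := fun ω => ⟪g t ω, w t ω - wstar⟫)]
    exact integral_congr_ae (hcond_inner t ht)
  -- bounds on F along the iterates
  have hFub : ∀ t : ℕ, ∀ ω, F (w t ω) ≤ F wstar + ⟪gradient F (w t ω), w t ω - wstar⟫ := by
    intro t ω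
    have h := hF_sc wstar (w t ω)
    have h2 : ⟪gradient F (w t ω), wstar - w t ω⟫
        = -⟪gradient F (w t ω), w t ω - wstar⟫ := by
      rw [show wstar - w t ω = -(w t ω - wstar) by abel, inner_neg_right]
    rw [h2] at h
    nlinarith [sq_nonneg ‖wstar - w t ω‖]
  have hFlb : ∀ t : ℕ, 1 ≤ t → ∀ ω, F wstar ≤ F (w t ω) :=
    fun t ht ω => hwstar_min _ (hw_mem t ht ω)
  have hFint : ∀ t : ℕ, 1 ≤ t → Integrable (fun ω => F (w t ω)) μ := by
    intro t ht
    refine Integrable.mono' ((integrable_const |F wstar|).add (hgradInnerInt t ht).abs)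
      (hFcont.comp_aestronglyMeasurable (hw_meas t)) ?_
    filter_upwards with ω
    simp only [Pi.add_apply]
    rw [Real.norm_eq_abs]
    have h1 := hFlb t ht ω
    have h2 := hFub t ω
    rw [abs_le]
    constructor
    · have := neg_abs_le (F wstar)
      have := abs_nonneg ⟪gradient F (w t ω), w t ω - wstar⟫
      linarith
    · have := le_abs_self (F wstar)
      have := le_abs_self ⟪gradient F (w t ω), w t ω - wstar⟫
      linarith
  -- second moment bound
  have hEg2 : ∀ t : ℕ, (∫ ω, ‖g t ω‖ ^ 2 ∂μ) ≤ G ^ 2 := by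
    intro t
    have h0 := integral_condExp (μ := μ) (hm t) (f := fun ω => ‖g t ω‖ ^ 2)
    have h2 : (∫ ω, (μ[fun ω => ‖g t ω‖ ^ 2|ℱ t]) ω ∂μ) ≤ ∫ _, G ^ 2 ∂μ :=
      integral_mono_ae integrable_condExp (integrable_const _) (hg_bdd t)
    simp only [integral_const, probReal_univ, measure_univ, ENNReal.toReal_one, smul_eq_mul, one_mul] at h2
    linarith
  have hG2 : 0 ≤ G ^ 2 := le_trans (integral_nonneg fun ω => sq_nonneg _) (hEg2 0)
  -- the per-step descent inequality in expectation
  have hstep : ∀ t : ℕ, 1 ≤ t →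
      (∫ ω, ‖w (t + 1) ω - wstar‖ ^ 2 ∂μ) ≤ (∫ ω, ‖w t ω - wstar‖ ^ 2 ∂μ)
        - 2 * (2 / (lam * (t + 1))) * (((∫ ω, F (w t ω) ∂μ) - F wstar)
            + lam / 2 * ∫ ω, ‖w t ω - wstar‖ ^ 2 ∂μ)
        + (2 / (lam * (t + 1))) ^ 2 * G ^ 2 := by
    intro t ht
    set η : ℝ := 2 / (lam * (t + 1)) with hη_def
    have ht1 : (0 : ℝ) < (t : ℝ) + 1 := by positivity
    have hη : 0 < η := by
      rw [hη_def]; positivity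
    have hpt : ∀ ω, ‖w (t + 1) ω - wstar‖ ^ 2 ≤
        ‖w t ω - wstar‖ ^ 2 - 2 * η * ⟪g t ω, w t ω - wstar⟫ + η ^ 2 * ‖g t ω‖ ^ 2 := by
      intro ω
      have h1 : ‖w (t + 1) ω - wstar‖ ≤ ‖(w t ω - η • g t ω) - wstar‖ := by
        rw [hw_rec t ht ω]; exact h_nonexp _ _ hwstar_mem
      have h2 : ‖(w t ω - η • g t ω) - wstar‖ ^ 2
          = ‖w t ω - wstar‖ ^ 2 - 2 * η * ⟪g t ω, w t ω - wstar⟫ + η ^ 2 * ‖g t ω‖ ^ 2 := by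
        have he : (w t ω - η • g t ω) - wstar = (w t ω - wstar) - η • g t ω := by abel
        rw [he, norm_sub_sq_real, real_inner_smul_right, norm_smul, Real.norm_eq_abs,
          abs_of_pos hη, mul_pow, real_inner_comm]
        ring
      nlinarith [norm_nonneg (w (t + 1) ω - wstar), norm_nonneg ((w t ω - η • g t ω) - wstar)]
    have hIrhs : Integrable (fun ω => ‖w t ω - wstar‖ ^ 2
        - 2 * η * ⟪g t ω, w t ω - wstar⟫ + η ^ 2 * ‖g t ω‖ ^ 2) μ :=
      ((hX2int t ht).sub ((hInnerInt t ht).const_mul (2 * η))).add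
        ((hg_sq_int t).const_mul (η ^ 2))
    have hI1 : (∫ ω, ‖w (t + 1) ω - wstar‖ ^ 2 ∂μ) ≤
        ∫ ω, (‖w t ω - wstar‖ ^ 2 - 2 * η * ⟪g t ω, w t ω - wstar⟫
          + η ^ 2 * ‖g t ω‖ ^ 2) ∂μ :=
      integral_mono (hX2int (t + 1) (by omega)) hIrhs hpt
    have hI2 : (∫ ω, (‖w t ω - wstar‖ ^ 2 - 2 * η * ⟪g t ω, w t ω - wstar⟫
          + η ^ 2 * ‖g t ω‖ ^ 2) ∂μ)
        = (∫ ω, ‖w t ω - wstar‖ ^ 2 ∂μ)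
          - 2 * η * (∫ ω, ⟪g t ω, w t ω - wstar⟫ ∂μ)
          + η ^ 2 * ∫ ω, ‖g t ω‖ ^ 2 ∂μ := by
      have hsub : Integrable (fun ω => ‖w t ω - wstar‖ ^ 2
          - 2 * η * ⟪g t ω, w t ω - wstar⟫) μ :=
        (hX2int t ht).sub ((hInnerInt t ht).const_mul (2 * η))
      rw [integral_add hsub ((hg_sq_int t).const_mul (η ^ 2)),
        integral_sub (hX2int t ht) ((hInnerInt t ht).const_mul (2 * η)),
        integral_const_mul, integral_const_mul]
    -- lower bound for the expected inner product
    have hsc : ∀ ω, F (w t ω) - F wstar + lam / 2 * ‖w t ω - wstar‖ ^ 2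
        ≤ ⟪gradient F (w t ω), w t ω - wstar⟫ := by
      intro ω
      have h := hF_sc wstar (w t ω)
      have h2 : ⟪gradient F (w t ω), wstar - w t ω⟫
          = -⟪gradient F (w t ω), w t ω - wstar⟫ := by
        rw [show wstar - w t ω = -(w t ω - wstar) by abel, inner_neg_right]
      have h3 : ‖wstar - w t ω‖ = ‖w t ω - wstar‖ := norm_sub_rev _ _
      rw [h2, h3] at h
      linarith
    have hIsc : ((∫ ω, F (w t ω) ∂μ) - F wstar)
          + lam / 2 * (∫ ω, ‖w t ω - wstar‖ ^ 2 ∂μ)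
        ≤ ∫ ω, ⟪gradient F (w t ω), w t ω - wstar⟫ ∂μ := by
      have hIl : Integrable (fun ω => F (w t ω) - F wstar
          + lam / 2 * ‖w t ω - wstar‖ ^ 2) μ :=
        (((hFint t ht).sub (integrable_const _)).add ((hX2int t ht).const_mul (lam / 2)))
      have := integral_mono hIl (hgradInnerInt t ht) hsc
      have hsub2 : Integrable (fun ω => F (w t ω) - F wstar) μ :=
        (hFint t ht).sub (integrable_const _)
      rw [integral_add hsub2 ((hX2int t ht).const_mul (lam / 2)),
        integral_sub (hFint t ht) (integrable_const _), integral_const_mul] at this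
      simpa using this
    rw [← hEinner t ht] at hIsc
    have hEg := hEg2 t
    have e1 := mul_le_mul_of_nonneg_left hIsc (by positivity : (0:ℝ) ≤ 2 * η)
    have e2 := mul_le_mul_of_nonneg_left hEg (by positivity : (0:ℝ) ≤ η ^ 2)
    calc (∫ ω, ‖w (t + 1) ω - wstar‖ ^ 2 ∂μ) ≤ _ := hI1
      _ = _ := hI2
      _ ≤ _ := by linarith
  -- per-step key inequality, polynomial form
  set c : ℕ → ℝ := fun k =>
    lam ^ 2 * (k : ℝ) * ((k : ℝ) - 1) * (∫ ω, ‖w k ω - wstar‖ ^ 2 ∂μ) with hc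
  have hkey : ∀ t : ℕ, 1 ≤ t →
      4 * lam * ((t : ℝ) * ((∫ ω, F (w t ω) ∂μ) - F wstar))
        ≤ (c t - c (t + 1)) + 4 * G ^ 2 := by
    intro t ht
    have hs : (1 : ℝ) ≤ (t : ℝ) := by exact_mod_cast ht
    have h := hstep t ht
    set s : ℝ := (t : ℝ) with hsdef
    set A := ∫ ω, ‖w t ω - wstar‖ ^ 2 ∂μ with hAdef
    set Bv := ∫ ω, ‖w (t + 1) ω - wstar‖ ^ 2 ∂μ with hBdef
    set Dv := (∫ ω, F (w t ω) ∂μ) - F wstar with hDdef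
    have hA0 : 0 ≤ A := ha_nonneg t
    have hB0 : 0 ≤ Bv := ha_nonneg (t + 1)
    have hP : (0 : ℝ) < lam * (s + 1) := by positivity
    have hpoly : (lam * (s + 1)) ^ 2 * Bv ≤ (lam * (s + 1)) ^ 2 * A
        - 4 * (lam * (s + 1)) * Dv - 2 * lam * (lam * (s + 1)) * A + 4 * G ^ 2 := by
      rw [← sub_nonneg]
      rw [← sub_nonneg] at h
      have hexp : (lam * (s + 1)) ^ 2 * A - 4 * (lam * (s + 1)) * Dv
          - 2 * lam * (lam * (s + 1)) * A + 4 * G ^ 2 - (lam * (s + 1)) ^ 2 * Bv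
          = (lam * (s + 1)) ^ 2 * ((A - 2 * (2 / (lam * (s + 1))) * (Dv + lam / 2 * A)
            + (2 / (lam * (s + 1))) ^ 2 * G ^ 2) - Bv) := by
        field_simp
        ring
      rw [hexp]
      exact mul_nonneg (by positivity) h
    have hcast : ((t + 1 : ℕ) : ℝ) = s + 1 := by push_cast [hsdef]; ring
    have hct : c t = lam ^ 2 * s * (s - 1) * A := by simp only [hc, hsdef, hAdef]
    have hct1 : c (t + 1) = lam ^ 2 * (s + 1) * s * Bv := by
      simp only [hc]
      rw [hcast, ← hBdef]
      ring
    rw [hct, hct1]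
    have hs0 : (0 : ℝ) ≤ s := by linarith
    have hs1 : (0 : ℝ) < s + 1 := by linarith
    nlinarith [mul_le_mul_of_nonneg_left hpoly hs0, hG2, sq_nonneg lam,
      mul_nonneg (mul_nonneg hlam.le hs0) hB0]
  -- telescoping sum
  have htel : ∀ n : ℕ, (∑ k ∈ Finset.Icc 1 n, (c k - c (k + 1))) = c 1 - c (n + 1) := by
    intro n
    induction n with
    | zero => simp
    | succ m ih =>
      rw [Finset.sum_Icc_succ_top (by omega : 1 ≤ m + 1), ih]
      ring
  have hc1 : c 1 = 0 := by simp [hc]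
  have hcT : 0 ≤ c (T + 1) := by
    simp only [hc]
    have he : ((T + 1 : ℕ) : ℝ) - 1 = (T : ℝ) := by push_cast; ring
    rw [he]
    exact mul_nonneg (mul_nonneg (mul_nonneg (by positivity) (by positivity))
      (by positivity)) (ha_nonneg (T + 1))
  have hsumD : 4 * lam * (∑ t ∈ Finset.Icc 1 T,
      (t : ℝ) * ((∫ ω, F (w t ω) ∂μ) - F wstar)) ≤ 4 * (T : ℝ) * G ^ 2 := by
    have h1 : (∑ t ∈ Finset.Icc 1 T,
        (4 * lam * ((t : ℝ) * ((∫ ω, F (w t ω) ∂μ) - F wstar))))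
        ≤ ∑ t ∈ Finset.Icc 1 T, ((c t - c (t + 1)) + 4 * G ^ 2) :=
      Finset.sum_le_sum fun t htm => hkey t (Finset.mem_Icc.mp htm).1
    rw [Finset.sum_add_distrib, htel T, Finset.sum_const, Nat.card_Icc] at h1
    rw [← Finset.mul_sum] at h1
    simp only [hc1, zero_sub, nsmul_eq_mul] at h1
    have hcard : ((T + 1 - 1 : ℕ) : ℝ) = (T : ℝ) := by simp
    rw [hcard] at h1
    nlinarith [hcT]
  -- Gauss sum
  have hgauss : ∀ n : ℕ, (∑ t ∈ Finset.Icc 1 n, (t : ℝ)) = n * (n + 1) / 2 := by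
    intro n
    induction n with
    | zero => simp
    | succ m ih =>
      rw [Finset.sum_Icc_succ_top (by omega : 1 ≤ m + 1), ih]
      push_cast
      ring
  have hT0 : (0 : ℝ) < (T : ℝ) := by exact_mod_cast hT
  have hT1 : (0 : ℝ) < (T : ℝ) + 1 := by linarith
  -- the averaged point as a convex combination
  have hwbar_eq : ∀ ω : Ω, (2 / (T * (T + 1) : ℝ)) • ∑ t ∈ Finset.Icc 1 T, (t : ℝ) • w t ω
      = ∑ t ∈ Finset.Icc 1 T, (2 / ((T : ℝ) * ((T : ℝ) + 1)) * (t : ℝ)) • w t ω := by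
    intro ω
    rw [Finset.smul_sum]
    exact Finset.sum_congr rfl fun t _ => smul_smul _ _ _
  have hκsum : (∑ t ∈ Finset.Icc 1 T, 2 / ((T : ℝ) * ((T : ℝ) + 1)) * (t : ℝ)) = 1 := by
    rw [← Finset.mul_sum, hgauss]
    field_simp
  have hκ0 : ∀ t : ℕ, 0 ≤ 2 / ((T : ℝ) * ((T : ℝ) + 1)) * (t : ℝ) := by
    intro t
    positivity
  have hbar_mem : ∀ ω : Ω,
      (∑ t ∈ Finset.Icc 1 T, (2 / ((T : ℝ) * ((T : ℝ) + 1)) * (t : ℝ)) • w t ω) ∈ W :=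
    fun ω => hW_convex.sum_mem (fun t _ => hκ0 t) hκsum
      (fun t htm => hw_mem t (Finset.mem_Icc.mp htm).1 ω)
  -- pointwise Jensen
  have hjensen : ∀ ω : Ω,
      F (∑ t ∈ Finset.Icc 1 T, (2 / ((T : ℝ) * ((T : ℝ) + 1)) * (t : ℝ)) • w t ω)
        ≤ ∑ t ∈ Finset.Icc 1 T, 2 / ((T : ℝ) * ((T : ℝ) + 1)) * (t : ℝ) * F (w t ω) := by
    intro ω
    set y := ∑ t ∈ Finset.Icc 1 T, (2 / ((T : ℝ) * ((T : ℝ) + 1)) * (t : ℝ)) • w t ω with hy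
    have h0 : (∑ t ∈ Finset.Icc 1 T,
        (2 / ((T : ℝ) * ((T : ℝ) + 1)) * (t : ℝ)) • (w t ω - y)) = 0 := by
      simp only [smul_sub]
      rw [Finset.sum_sub_distrib, ← Finset.sum_smul, hκsum, one_smul, ← hy, sub_self]
    have h1 : ∀ t ∈ Finset.Icc 1 T,
        2 / ((T : ℝ) * ((T : ℝ) + 1)) * (t : ℝ) * (F y + ⟪gradient F y, w t ω - y⟫)
          ≤ 2 / ((T : ℝ) * ((T : ℝ) + 1)) * (t : ℝ) * F (w t ω) := by
      intro t _
      refine mul_le_mul_of_nonneg_left ?_ (hκ0 t)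
      nlinarith [hF_sc (w t ω) y, sq_nonneg ‖w t ω - y‖]
    have h2 := Finset.sum_le_sum h1
    have h3 : (∑ t ∈ Finset.Icc 1 T,
        2 / ((T : ℝ) * ((T : ℝ) + 1)) * (t : ℝ) * (F y + ⟪gradient F y, w t ω - y⟫))
        = F y + ⟪gradient F y, ∑ t ∈ Finset.Icc 1 T,
            (2 / ((T : ℝ) * ((T : ℝ) + 1)) * (t : ℝ)) • (w t ω - y)⟫ := by
      rw [inner_sum]
      have hterm : ∀ t ∈ Finset.Icc 1 T,
          2 / ((T : ℝ) * ((T : ℝ) + 1)) * (t : ℝ) * (F y + ⟪gradient F y, w t ω - y⟫)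
            = 2 / ((T : ℝ) * ((T : ℝ) + 1)) * (t : ℝ) * F y
              + ⟪gradient F y, (2 / ((T : ℝ) * ((T : ℝ) + 1)) * (t : ℝ)) • (w t ω - y)⟫ := by
        intro t _
        rw [real_inner_smul_right]
        ring
      rw [Finset.sum_congr rfl hterm, Finset.sum_add_distrib, ← Finset.sum_mul, hκsum,
        one_mul]
    rw [h3, h0, inner_zero_right, add_zero] at h2
    exact h2
  -- integrability of the average and of the upper bound
  have hS_int : Integrable (fun ω => ∑ t ∈ Finset.Icc 1 T,
      2 / ((T : ℝ) * ((T : ℝ) + 1)) * (t : ℝ) * F (w t ω)) μ :=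
    integrable_finset_sum _ fun t htm =>
      ((hFint t (Finset.mem_Icc.mp htm).1).const_mul _)
  have hbar_meas : AEStronglyMeasurable (fun ω =>
      ∑ t ∈ Finset.Icc 1 T, (2 / ((T : ℝ) * ((T : ℝ) + 1)) * (t : ℝ)) • w t ω) μ :=
    Finset.aestronglyMeasurable_fun_sum _ fun t _ => (hw_meas t).fun_const_smul _
  have hFbar_int : Integrable (fun ω =>
      F (∑ t ∈ Finset.Icc 1 T, (2 / ((T : ℝ) * ((T : ℝ) + 1)) * (t : ℝ)) • w t ω)) μ := by
    refine Integrable.mono' ((integrable_const |F wstar|).add hS_int.abs)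
      (hFcont.comp_aestronglyMeasurable hbar_meas) ?_
    filter_upwards with ω
    simp only [Pi.add_apply]
    rw [Real.norm_eq_abs]
    have hlow := hwstar_min _ (hbar_mem ω)
    have hup := hjensen ω
    rw [abs_le]
    constructor
    · have := neg_abs_le (F wstar)
      have := abs_nonneg (∑ t ∈ Finset.Icc 1 T,
        2 / ((T : ℝ) * ((T : ℝ) + 1)) * (t : ℝ) * F (w t ω))
      linarith
    · have := le_abs_self (F wstar)
      have := le_abs_self (∑ t ∈ Finset.Icc 1 T,
        2 / ((T : ℝ) * ((T : ℝ) + 1)) * (t : ℝ) * F (w t ω))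
      have := abs_nonneg (F wstar)
      linarith
  -- integrate Jensen
  have hIb : (∫ ω, F (∑ t ∈ Finset.Icc 1 T,
        (2 / ((T : ℝ) * ((T : ℝ) + 1)) * (t : ℝ)) • w t ω) ∂μ)
      ≤ ∑ t ∈ Finset.Icc 1 T,
          2 / ((T : ℝ) * ((T : ℝ) + 1)) * (t : ℝ) * (∫ ω, F (w t ω) ∂μ) := by
    have h1 := integral_mono hFbar_int hS_int hjensen
    rw [integral_finset_sum _ (fun t htm =>
      ((hFint t (Finset.mem_Icc.mp htm).1).const_mul _))] at h1
    refine h1.trans_eq ?_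
    exact Finset.sum_congr rfl fun t _ => integral_const_mul _ _
  -- final computation
  have hrw_goal : (fun ω => F ((2 / (T * (T + 1) : ℝ)) •
      ∑ t ∈ Finset.Icc 1 T, (t : ℝ) • w t ω))
      = fun ω => F (∑ t ∈ Finset.Icc 1 T,
          (2 / ((T : ℝ) * ((T : ℝ) + 1)) * (t : ℝ)) • w t ω) := by
    funext ω
    rw [hwbar_eq ω]
  rw [hrw_goal]
  have e1 : (∑ t ∈ Finset.Icc 1 T,
      2 / ((T : ℝ) * ((T : ℝ) + 1)) * (t : ℝ) * (∫ ω, F (w t ω) ∂μ)) - F wstar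
      = ∑ t ∈ Finset.Icc 1 T, 2 / ((T : ℝ) * ((T : ℝ) + 1)) * (t : ℝ)
          * ((∫ ω, F (w t ω) ∂μ) - F wstar) := by
    simp only [mul_sub]
    rw [Finset.sum_sub_distrib, ← Finset.sum_mul, hκsum, one_mul]
  have e2 : (∑ t ∈ Finset.Icc 1 T, 2 / ((T : ℝ) * ((T : ℝ) + 1)) * (t : ℝ)
        * ((∫ ω, F (w t ω) ∂μ) - F wstar))
      = 2 / ((T : ℝ) * ((T : ℝ) + 1)) * ∑ t ∈ Finset.Icc 1 T,
          (t : ℝ) * ((∫ ω, F (w t ω) ∂μ) - F wstar) := by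
    rw [Finset.mul_sum]
    exact Finset.sum_congr rfl fun t _ => by ring
  have hsum2 : (∑ t ∈ Finset.Icc 1 T,
      (t : ℝ) * ((∫ ω, F (w t ω) ∂μ) - F wstar)) ≤ (T : ℝ) * G ^ 2 / lam := by
    rw [le_div_iff₀ hlam]
    nlinarith [hsumD]
  have hCpos : (0 : ℝ) ≤ 2 / ((T : ℝ) * ((T : ℝ) + 1)) := by positivity
  calc (∫ ω, F (∑ t ∈ Finset.Icc 1 T,
        (2 / ((T : ℝ) * ((T : ℝ) + 1)) * (t : ℝ)) • w t ω) ∂μ) - F wstar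
      ≤ (∑ t ∈ Finset.Icc 1 T,
          2 / ((T : ℝ) * ((T : ℝ) + 1)) * (t : ℝ) * (∫ ω, F (w t ω) ∂μ)) - F wstar := by
        linarith [hIb]
    _ = 2 / ((T : ℝ) * ((T : ℝ) + 1)) * ∑ t ∈ Finset.Icc 1 T,
          (t : ℝ) * ((∫ ω, F (w t ω) ∂μ) - F wstar) := by rw [e1, e2]
    _ ≤ 2 / ((T : ℝ) * ((T : ℝ) + 1)) * ((T : ℝ) * G ^ 2 / lam) :=
        mul_le_mul_of_nonneg_left hsum2 hCpos
    _ = 2 * G ^ 2 / (lam * (T + 1)) := by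
        field_simp
end

section
/- Privacy loss distribution of the Gaussian mechanism. Let m, m' ∈ ℝ with m ≠ m' and σ > 0, and set η := |m − m'|/σ. Let p and q denote the probability density functions of the one-dimensional Gaussian distributions N(m, σ²) and N(m', σ²). Then the pushforward of the measure N(m, σ²) under the log-likelihood-ratio map x ↦ log(p(x)/q(x)) = (m − m')(2x − m − m')/(2σ²) is exactly the Gaussian distribution N(η²/2, η²) on ℝ (mean η²/2, variance η²). -/
open MeasureTheory ProbabilityTheory

/-- **Privacy loss distribution of the one-dimensional Gaussian mechanism.**
Let `p`, `q` be the densities of `N(m, σ²)` and `N(m', σ²)` with `m ≠ m'`, `σ > 0`, and set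
`η = |m − m'|/σ`. Then the pushforward of `N(m, σ²)` under the log-likelihood-ratio map
`x ↦ log (p x / q x)` is exactly the Gaussian distribution `N(η²/2, η²)`. -/
theorem gaussian_privacy_loss_distribution (m m' σ : ℝ) (hne : m ≠ m') (hσ : 0 < σ) :
    Measure.map
        (fun x : ℝ =>
          Real.log (gaussianPDFReal m ⟨σ ^ 2, sq_nonneg σ⟩ x /
            gaussianPDFReal m' ⟨σ ^ 2, sq_nonneg σ⟩ x))
        (gaussianReal m ⟨σ ^ 2, sq_nonneg σ⟩) =
      gaussianReal ((|m - m'| / σ) ^ 2 / 2) ⟨(|m - m'| / σ) ^ 2, sq_nonneg _⟩ := by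
  have hσ2 : (σ : ℝ) ^ 2 ≠ 0 := pow_ne_zero 2 hσ.ne'
  set c : ℝ := (m - m') / σ ^ 2 with hc
  set d : ℝ := (m' ^ 2 - m ^ 2) / (2 * σ ^ 2) with hd
  have hfun : (fun x : ℝ =>
      Real.log (gaussianPDFReal m ⟨σ ^ 2, sq_nonneg σ⟩ x /
        gaussianPDFReal m' ⟨σ ^ 2, sq_nonneg σ⟩ x)) = fun x => c * x + d := by
    funext x
    have hC : (0 : ℝ) < Real.sqrt (2 * Real.pi * σ ^ 2) :=
      Real.sqrt_pos.2 (by positivity)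
    simp only [gaussianPDFReal, NNReal.coe_mk]
    show Real.log ((Real.sqrt (2 * Real.pi * σ ^ 2))⁻¹ * Real.exp (-(x - m) ^ 2 / (2 * σ ^ 2)) /
      ((Real.sqrt (2 * Real.pi * σ ^ 2))⁻¹ * Real.exp (-(x - m') ^ 2 / (2 * σ ^ 2)))) = c * x + d
    rw [mul_div_mul_left _ _ (inv_ne_zero hC.ne'), ← Real.exp_sub, Real.log_exp, hc, hd]
    field_simp
    ring
  rw [hfun]
  have h1 : (fun x : ℝ => c * x + d) = (fun x : ℝ => x + d) ∘ (fun x : ℝ => c * x) := rfl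
  rw [h1, ← Measure.map_map (measurable_add_const d) (measurable_id'.const_mul c),
    gaussianReal_map_const_mul (μ := m) (v := ⟨σ ^ 2, sq_nonneg σ⟩), gaussianReal_map_add_const]
  congr 1
  · rw [hc, hd, div_pow, sq_abs]
    field_simp
    ring
  · ext
    show c ^ 2 * σ ^ 2 = (|m - m'| / σ) ^ 2
    simp only [NNReal.coe_mul, NNReal.coe_mk, hc, div_pow, sq_abs]
    field_simp
end
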